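/- For any λ ∈ [0,1) and any y ≥ −1, it holds that log(1 + λy) ≥ λy − 4ψ_E(λ)·y², where ψ_E(λ) = (−log(1−λ) − λ)/4. Equivalently, exp(λy − y²(−log(1−λ) − λ)) ≤ 1 + λy. -/

import Mathlib

open Real

/-- ψ_E(λ) = (−log(1−λ) − λ)/4 -/
noncomputable def psiE (l : ℝ) : ℝ := (-Real.log (1 - l) - l) / 4

lemma fan_key (lam y : ℝ) (hlam : lam ∈ Set.Ico (0 : ℝ) 1) (hy : -1 ≤ y) :
    lam * y - y ^ 2 * (-Real.log (1 - lam) - lam) ≤ Real.log (1 + lam * y) := by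
  obtain ⟨h0, h1⟩ := hlam
  set F : ℝ → ℝ := fun t => Real.log (1 + t * y) - t * y + y ^ 2 * (-Real.log (1 - t) - t)
    with hF
  have hderiv : ∀ t : ℝ, 0 ≤ t → t < 1 →
      HasDerivAt F (y / (1 + t * y) - y + y ^ 2 * (-(-1 / (1 - t)) - 1)) t := by
    intro t ht0 ht1
    have ha : 0 < 1 + t * y := by nlinarith
    have hb : 0 < 1 - t := by linarith
    have h1 : HasDerivAt (fun t : ℝ => 1 + t * y) y t := by
      simpa using ((hasDerivAt_id t).mul_const y).const_add 1
    have h2 : HasDerivAt (fun t : ℝ => Real.log (1 + t * y)) (y / (1 + t * y)) t :=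
      h1.log (ne_of_gt ha)
    have h3 : HasDerivAt (fun t : ℝ => t * y) y t := by
      simpa using (hasDerivAt_id t).mul_const y
    have h4 : HasDerivAt (fun t : ℝ => 1 - t) (-1) t := by
      exact (hasDerivAt_id' t).const_sub 1
    have h5 : HasDerivAt (fun t : ℝ => Real.log (1 - t)) (-1 / (1 - t)) t :=
      h4.log (ne_of_gt hb)
    have h6 : HasDerivAt (fun t : ℝ => -Real.log (1 - t) - t) (-(-1 / (1 - t)) - 1) t :=
      h5.neg.sub (hasDerivAt_id t)
    exact (h2.sub h3).add (h6.const_mul (y ^ 2))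
  have hnonneg : ∀ t : ℝ, 0 ≤ t → t < 1 →
      0 ≤ y / (1 + t * y) - y + y ^ 2 * (-(-1 / (1 - t)) - 1) := by
    intro t ht0 ht1
    have ha : 0 < 1 + t * y := by nlinarith
    have hb : 0 < 1 - t := by linarith
    have key : y / (1 + t * y) - y + y ^ 2 * (-(-1 / (1 - t)) - 1)
        = t ^ 2 * y ^ 2 * (y + 1) / ((1 + t * y) * (1 - t)) := by
      rw [div_sub' ha.ne', div_add' _ _ _ ha.ne', div_eq_div_iff ha.ne' (by positivity)]
      field_simp
      ring
    rw [key]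
    have : 0 ≤ y + 1 := by linarith
    positivity
  have hmono : MonotoneOn F (Set.Icc 0 lam) := by
    apply monotoneOn_of_deriv_nonneg (convex_Icc 0 lam)
    · apply ContinuousOn.mono (s := Set.Icc 0 lam) ?_ (le_refl _)
      intro t ht
      exact ((hderiv t ht.1 (lt_of_le_of_lt ht.2 h1)).continuousAt).continuousWithinAt
    · intro t ht
      rw [interior_Icc] at ht
      exact ((hderiv t ht.1.le (lt_of_lt_of_le ht.2 h1.le)).differentiableAt).differentiableWithinAt
    · intro t ht
      rw [interior_Icc] at ht
      rw [(hderiv t ht.1.le (lt_of_lt_of_le ht.2 h1.le)).deriv]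
      exact hnonneg t ht.1.le (lt_of_lt_of_le ht.2 h1.le)
  have h00 : F 0 = 0 := by simp [hF]
  have := hmono (Set.left_mem_Icc.2 h0) (Set.right_mem_Icc.2 h0) h0
  rw [h00] at this
  simp only [hF] at this
  linarith

theorem fan_inequality (lam y : ℝ) (hlam : lam ∈ Set.Ico (0 : ℝ) 1) (hy : -1 ≤ y) :
    lam * y - 4 * psiE lam * y ^ 2 ≤ Real.log (1 + lam * y) ∧
    Real.exp (lam * y - y ^ 2 * (-Real.log (1 - lam) - lam)) ≤ 1 + lam * y := by
  have key := fan_key lam y hlam hy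
  have ha : 0 < 1 + lam * y := by nlinarith [hlam.1, hlam.2]
  constructor
  · have : 4 * psiE lam * y ^ 2 = y ^ 2 * (-Real.log (1 - lam) - lam) := by
      unfold psiE; ring
    linarith
  · calc Real.exp (lam * y - y ^ 2 * (-Real.log (1 - lam) - lam))
        ≤ Real.exp (Real.log (1 + lam * y)) := Real.exp_le_exp.2 key
      _ = 1 + lam * y := Real.exp_log ha
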